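/- arXiv:1806.00262 — 2 statements merged into one kernel-verified Lean document; each statement's English description precedes it below -/
import Mathlib

section
/- The adjoint Lie algebra of M_{1,1}(E^1) does not satisfy the identity [x,y,t,...,t,[u,v]] = 0 (with t repeated m times) for any integer m ≥ 0; in particular, with x = u = t the matrix with 1 in position (1,1) and 0 elsewhere, y the matrix with e_1 in position (1,2) and 0 elsewhere, and v the matrix with e_2 in position (2,1) and 0 elsewhere, the left-normalized bracket [x,y,t^(m),[u,v]] is nonzero. -/
/-- The Grassmann (exterior) algebra over `F` on countably many generators. -/
abbrev GrAlg (F : Type) [Field F] := ExteriorAlgebra F (ℕ →₀ F)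

/-- The `i`-th Grassmann generator `e_i`. -/
noncomputable def gen (F : Type) [Field F] (i : ℕ) : GrAlg F :=
  ExteriorAlgebra.ι F (Finsupp.single i (1 : F))

/-- The submodule of generators (degree-one part). -/
noncomputable def grange (F : Type) [Field F] : Submodule F (GrAlg F) :=
  LinearMap.range (ExteriorAlgebra.ι F : (ℕ →₀ F) →ₗ[F] GrAlg F)

/-- The even part `E^1_0` of the unital Grassmann algebra: span of `1` and
products of even length. -/
noncomputable def evenPart1 (F : Type) [Field F] : Submodule F (GrAlg F) :=
  ⨆ n : ℕ, (grange F) ^ (2 * n)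

/-- The even part `E_0` of the non-unital Grassmann algebra: span of
products of even positive length. -/
noncomputable def evenPart (F : Type) [Field F] : Submodule F (GrAlg F) :=
  ⨆ n : ℕ, (grange F) ^ (2 * (n + 1))

/-- The odd part `E_1`: span of products of odd length. -/
noncomputable def oddPart (F : Type) [Field F] : Submodule F (GrAlg F) :=
  ⨆ n : ℕ, (grange F) ^ (2 * n + 1)

/-- The set of matrices of `M_{1,1}`: diagonal entries in `D`, off-diagonal
entries in the odd part. -/
def M11carrier (F : Type) [Field F] (D : Submodule F (GrAlg F)) :
    Set (Matrix (Fin 2) (Fin 2) (GrAlg F)) :=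
  {A | A 0 0 ∈ D ∧ A 1 1 ∈ D ∧ A 0 1 ∈ oddPart F ∧ A 1 0 ∈ oddPart F}

/-- Left-normalized Lie bracket: `lnb x [a₁,…,aₙ] = [[…[x,a₁],…],aₙ]`. -/
def lnb {L : Type*} [LieRing L] (x : L) (l : List L) : L :=
  l.foldl (fun a b => ⁅a, b⁆) x

attribute [local instance] LieRing.ofAssociativeRing

open ExteriorAlgebra in
noncomputable def coordMap (F : Type) [Field F] : (ℕ →₀ F) →ₗ[F] (Fin 2 → F) where
  toFun v := ![v 1, v 2]
  map_add' a b := by funext i; fin_cases i <;> simp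
  map_smul' c a := by funext i; fin_cases i <;> simp

noncomputable def myAlt (F : Type) [Field F] : (ℕ →₀ F) [⋀^Fin 2]→ₗ[F] F :=
  (Matrix.detRowAlternating (R := F) (n := Fin 2)).compLinearMap (coordMap F)

noncomputable def myFam (F : Type) [Field F] : ∀ i : ℕ, (ℕ →₀ F) [⋀^Fin i]→ₗ[F] F
  | 2 => myAlt F
  | _ => 0

open ExteriorAlgebra in
lemma gen_mul_ne_zero (F : Type) [Field F] : gen F 1 * gen F 2 ≠ 0 := by
  intro h
  have h2 : gen F 1 * gen F 2 = ιMulti F 2 ![Finsupp.single 1 (1:F), Finsupp.single 2 (1:F)] := by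
    rw [ιMulti_apply]
    simp [gen, List.ofFn_succ]
  have := congrArg (liftAlternating (myFam F)) h
  rw [h2, liftAlternating_apply_ιMulti, map_zero] at this
  have : myAlt F ![Finsupp.single 1 (1:F), Finsupp.single 2 (1:F)] = 0 := this
  rw [myAlt, AlternatingMap.compLinearMap_apply] at this
  have h3 : (Matrix.of fun i => coordMap F (![Finsupp.single 1 (1:F), Finsupp.single 2 (1:F)] i)).det = 0 := this
  rw [Matrix.det_fin_two] at h3
  simp [coordMap] at h3

lemma lnb_cons {L : Type*} [LieRing L] (a b : L) (l : List L) :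
    lnb a (b :: l) = lnb ⁅a, b⁆ l := rfl

lemma lnb_neg {L : Type*} [LieRing L] (a : L) (l : List L) : lnb (-a) l = - lnb a l := by
  induction l generalizing a with
  | nil => rfl
  | cons b l ih => rw [lnb_cons, lnb_cons, neg_lie, ih]

lemma lnb_rep {L : Type*} [LieRing L] (a x : L) (h : ⁅a, x⁆ = -a) (m : ℕ) :
    lnb a (List.replicate m x) = a ∨ lnb a (List.replicate m x) = -a := by
  induction m with
  | zero => left; rfl
  | succ m ih =>
    rw [List.replicate_succ, lnb_cons, h, lnb_neg]
    rcases ih with h' | h'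
    · right; rw [h']
    · left; rw [h', neg_neg]

set_option maxHeartbeats 2000000 in

/-- `M_{1,1}(E¹)` does not satisfy `[x,y,t^(m),[u,v]] = 0` for any `m ≥ 0`:
with `x = u = t = E₁₁`, `y` the matrix with `e₁` in position (1,2), and `v` the
matrix with `e₂` in position (2,1), the bracket `[x,y,t^(m),[u,v]]` is nonzero. -/
theorem stmt3 (F : Type) [Field F] (hF : ringChar F ≠ 2) (m : ℕ) :
    let x : Matrix (Fin 2) (Fin 2) (GrAlg F) := !![(1 : GrAlg F), 0; 0, 0]
    let y : Matrix (Fin 2) (Fin 2) (GrAlg F) := !![0, gen F 1; 0, 0]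
    let v : Matrix (Fin 2) (Fin 2) (GrAlg F) := !![0, 0; gen F 2, 0]
    let t := x
    let u := x
    ⁅lnb ⁅x, y⁆ (List.replicate m t), ⁅u, v⁆⁆ ≠ 0 := by
  intro x y v t u
  have z : (0 : Matrix (Fin 2) (Fin 2) (GrAlg F)) = !![0,0;0,0] := by
    ext i j; fin_cases i <;> fin_cases j <;> rfl
  have hxy' : x * y = y := by simp [x, y, Matrix.mul_fin_two]; ext i; fin_cases i <;> rfl
  have hyx' : y * x = 0 := by rw [z]; simp [x, y, Matrix.mul_fin_two]; ext i; fin_cases i <;> rfl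
  have huv' : u * v = 0 := by rw [z]; simp [u, x, v, Matrix.mul_fin_two]; ext i; fin_cases i <;> rfl
  have hvu' : v * u = v := by simp [u, x, v, Matrix.mul_fin_two]; ext i; fin_cases i <;> rfl
  have hyv' : y * v = !![gen F 1 * gen F 2, 0; 0, 0] := by simp [y, v, Matrix.mul_fin_two]; ext i; fin_cases i <;> rfl
  have hvy' : v * y = !![0, 0; 0, gen F 2 * gen F 1] := by simp [y, v, Matrix.mul_fin_two]; ext i; fin_cases i <;> rfl
  have hxy : ⁅x, y⁆ = y := by rw [Ring.lie_def, hxy', hyx', sub_zero]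
  have hyx : ⁅y, x⁆ = -y := by rw [Ring.lie_def, hxy', hyx', zero_sub]
  have huv : ⁅u, v⁆ = -v := by rw [Ring.lie_def, huv', hvu', zero_sub]
  have hyv : ⁅y, v⁆ 0 0 = gen F 1 * gen F 2 := by
    rw [Ring.lie_def, hyv', hvy', Matrix.sub_apply]
    simp
  intro hzero
  rw [hxy, huv] at hzero
  rcases lnb_rep y x hyx m with h | h <;> rw [h] at hzero
  · rw [lie_neg] at hzero
    have := congrFun (congrFun (neg_eq_zero.mp hzero) 0) 0
    change _ = (0 : GrAlg F) at this
    exact gen_mul_ne_zero F (hyv ▸ this)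
  · rw [neg_lie, lie_neg, neg_neg] at hzero
    have := congrFun (congrFun hzero 0) 0
    change _ = (0 : GrAlg F) at this
    exact gen_mul_ne_zero F (hyv ▸ this)
end

section
/- Over a field of characteristic p > 2, the adjoint Lie algebra M_{1,1}(E) does not satisfy the identity [x,y^(p-1),x^(p-1),z_1,...,z_{2k},y] = 0 for any integer k ≥ 0. -/
attribute [local instance 100] LieRing.ofAssociativeRing

section Basics
variable (F : Type) [Field F]

lemma gen_anticomm (i j : ℕ) : gen F i * gen F j = -(gen F j * gen F i) := by
  have h := ExteriorAlgebra.ι_add_mul_swap (R := F)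
    (Finsupp.single i (1:F)) (Finsupp.single j (1:F))
  unfold gen
  rw [eq_neg_iff_add_eq_zero]
  exact h

lemma gen_sq (i : ℕ) : gen F i * gen F i = 0 :=
  ExteriorAlgebra.ι_sq_zero _

/-- Products of distinct generators are nonzero. -/
lemma prodG_ne_zero (l : List ℕ) (hl : l.Nodup) :
    (l.map (gen F)).prod ≠ 0 := by
  classical
  set n := l.length with hn
  set v : Fin n → (ℕ →₀ F) := fun i => Finsupp.single (l.get i) 1 with hv
  have hprod : (l.map (gen F)).prod = ExteriorAlgebra.ιMulti F n v := by
    rw [ExteriorAlgebra.ιMulti_apply]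
    congr 1
    conv_lhs => rw [← List.ofFn_get l]
    rw [List.map_ofFn]
    rfl
  -- linear functional
  set φ : (ℕ →₀ F) →ₗ[F] (Fin n → F) := LinearMap.pi (fun i => Finsupp.lapply (l.get i)) with hφ
  set ψ : (ℕ →₀ F) [⋀^Fin n]→ₗ[F] F := (Matrix.detRowAlternating).compLinearMap φ with hψ
  set f : ∀ i, (ℕ →₀ F) [⋀^Fin i]→ₗ[F] F := Function.update (fun _ => 0) n ψ with hf
  have key : ExteriorAlgebra.liftAlternating f (ExteriorAlgebra.ιMulti F n v) = ψ v := by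
    rw [ExteriorAlgebra.liftAlternating_apply_ιMulti]
    simp [hf]
  have hdet : ψ v = 1 := by
    have hinj : Function.Injective l.get := List.nodup_iff_injective_get.mp hl
    rw [hψ, AlternatingMap.compLinearMap_apply]
    have : (φ ∘ v) = fun i : Fin n => (1 : Matrix (Fin n) (Fin n) F) i := by
      funext i
      funext j
      simp only [hφ, hv, Function.comp_apply, LinearMap.pi_apply, Finsupp.lapply_apply]
      rw [Finsupp.single_apply]
      by_cases hij : i = j
      · simp [hij, Matrix.one_apply]
      · have : l.get i ≠ l.get j := fun h => hij (hinj h)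
        simp only [Matrix.one_apply, if_neg hij]
        simpa using this
    show Matrix.detRowAlternating (φ ∘ v) = 1
    rw [this]
    exact Matrix.det_one
  intro h0
  rw [hprod] at h0
  rw [h0] at key
  simp at key
  rw [hdet] at key
  exact one_ne_zero key.symm

end Basics


section SumPow
variable {R : Type*} [Ring R] (b : ℕ → R)

lemma bpow_eq_zero (hsq : ∀ i, b i * b i = 0) (i m : ℕ) (hm : 2 ≤ m) :
    b i ^ m = 0 := by
  obtain ⟨r, rfl⟩ : ∃ r, m = r + 2 := ⟨m - 2, by omega⟩
  rw [pow_add, pow_two, hsq, mul_zero]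

lemma sum_commute (hcomm : ∀ i j, Commute (b i) (b j)) (n j : ℕ) :
    Commute (∑ i ∈ Finset.range n, b i) (b j) :=
  Commute.sum_left _ _ _ (fun i _ => hcomm i j)

lemma sum_pow_eq_zero (hcomm : ∀ i j, Commute (b i) (b j))
    (hsq : ∀ i, b i * b i = 0) :
    ∀ n m, n < m → (∑ j ∈ Finset.range n, b j) ^ m = 0 := by
  intro n
  induction n with
  | zero => intro m hm; rw [Finset.sum_range_zero, zero_pow (by omega)]
  | succ n ih =>
    intro m hm
    rw [Finset.sum_range_succ, Commute.add_pow (sum_commute b hcomm n n)]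
    apply Finset.sum_eq_zero
    intro i hi
    simp only [Finset.mem_range] at hi
    by_cases h2 : m - i ≥ 2
    · rw [bpow_eq_zero b hsq n _ h2, mul_zero, zero_mul]
    · have : n < i := by omega
      rw [ih i this, zero_mul, zero_mul]

lemma sum_pow_eq_factorial (hcomm : ∀ i j, Commute (b i) (b j))
    (hsq : ∀ i, b i * b i = 0) (n : ℕ) :
    (∑ j ∈ Finset.range n, b j) ^ n = n.factorial • ((List.range n).map b).prod := by
  induction n with
  | zero => simp
  | succ n ih =>
    rw [Finset.sum_range_succ, Commute.add_pow (sum_commute b hcomm n n)]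
    rw [Finset.sum_range_succ, Finset.sum_range_succ]
    have h1 : ∀ i ∈ Finset.range n,
        (∑ j ∈ Finset.range n, b j) ^ i * b n ^ (n + 1 - i) * ((n+1).choose i : R) = 0 := by
      intro i hi
      simp only [Finset.mem_range] at hi
      rw [bpow_eq_zero b hsq n _ (by omega), mul_zero, zero_mul]
    rw [Finset.sum_eq_zero h1, zero_add]
    rw [sum_pow_eq_zero b hcomm hsq n (n+1) (by omega)]
    simp only [zero_mul, add_zero]
    rw [ih]
    rw [List.range_succ, List.map_append, List.prod_append]
    simp only [Nat.add_sub_cancel, pow_one, List.map_cons, List.map_nil,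
      List.prod_cons, List.prod_nil, mul_one, Nat.choose_succ_self_right]
    rw [smul_mul_assoc, Nat.factorial_succ, mul_comm (n+1) n.factorial, mul_smul]
    have h3 : n + 1 - n = 1 := by omega
    simp only [h3, pow_one, nsmul_eq_mul, Nat.cast_mul]
    rw [(Nat.cast_commute (α := R) (n+1) ((List.map b (List.range n)).prod * b n)).eq,
      mul_assoc]


-- Generic 2x2 matrix bracket step lemmas
section Steps
variable {R : Type*} [Ring R]

/-- The "state" matrix `sI + offdiagonal e f`. -/
def Wm (s e f : R) : Matrix (Fin 2) (Fin 2) R := !![s, e; f, s]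

lemma Wm_ne_zero (s e f : R) (hs : s ≠ 0) : Wm s e f ≠ 0 := by
  intro h
  apply hs
  have := congrFun (congrFun h 0) 0
  simpa [Wm] using this

lemma stepY (s e f b v : R) (hsb : s * b = b * s) (hsv : s * v = v * s)
    (hve : v * e = -(e * v)) (hfb : f * b = b * f) :
    ⁅Wm s e f, !![b, 0; v, 0]⁆ = Wm (e * v) (-(b * e)) (b * f) := by
  simp only [Ring.lie_def, Wm, Matrix.mul_fin_two]
  ext i j
  fin_cases i <;> fin_cases j <;>
    simp [Matrix.sub_apply] <;>
    (try simp only [hsb, hsv, hve, hfb]) <;> abel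

lemma stepX (s e f a u : R) (hsa : s * a = a * s) (hsu : s * u = u * s)
    (hue : u * f = -(f * u)) (hfa : f * a = a * f) :
    ⁅Wm s e f, !![a, u; 0, 0]⁆ = Wm (f * u) (-(a * e)) (a * f) := by
  simp only [Ring.lie_def, Wm, Matrix.mul_fin_two]
  ext i j
  fin_cases i <;> fin_cases j <;>
    simp [Matrix.sub_apply] <;>
    (try simp only [hsa, hsu, hue, hfa]) <;> abel

lemma stepZ (s e f q : R) (hsq : s * q = q * s) (hfq : f * q = q * f) :
    ⁅Wm s e f, !![q, 0; 0, 0]⁆ = Wm 0 (-(q * e)) (q * f) := by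
  simp only [Ring.lie_def, Wm, Matrix.mul_fin_two]
  ext i j
  fin_cases i <;> fin_cases j <;>
    simp [Matrix.sub_apply] <;>
    (try simp only [hsq, hfq]) <;> abel

lemma step0 (a u b v : R) (hab : a * b = b * a) (hva : v * a = a * v)
    (huv : u * v = -(v * u)) :
    ⁅!![a, u; 0, 0], !![b, 0; v, 0]⁆ = Wm (u * v) (-(b * u)) (-(a * v)) := by
  simp only [Ring.lie_def, Wm, Matrix.mul_fin_two]
  ext i j
  fin_cases i <;> fin_cases j <;>
    simp [Matrix.sub_apply] <;>
    (try simp only [hab, hva, huv]) <;> abel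

end Steps

section Blocks
variable (F : Type) [Field F]

/-- Grassmann blocks: products of two successive generators. -/
noncomputable def Bk (j : ℕ) : GrAlg F := gen F (2*j) * gen F (2*j+1)

lemma Bk_gen_comm (j l : ℕ) : Commute (Bk F j) (gen F l) := by
  unfold Commute SemiconjBy Bk
  linear_combination (norm := noncomm_ring)
    gen F (2*j) * (gen_anticomm F (2*j+1) l) - (gen_anticomm F l (2*j)) * gen F (2*j+1)

lemma Bk_comm (i j : ℕ) : Commute (Bk F i) (Bk F j) := by
  have h1 := Bk_gen_comm F i (2*j)
  have h2 := Bk_gen_comm F i (2*j+1)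
  unfold Bk
  exact (h1.mul_right h2)

lemma Bk_sq (j : ℕ) : Bk F j * Bk F j = 0 := by
  unfold Bk
  linear_combination (norm := noncomm_ring)
    gen F (2*j) * (gen_anticomm F (2*j+1) (2*j)) * gen F (2*j+1)
    - (gen_sq F (2*j)) * gen F (2*j+1) * gen F (2*j+1)

end Blocks

section Setup
variable (F : Type) [Field F] (p k : ℕ)

noncomputable def aD : GrAlg F := ∑ j ∈ Finset.range (p-1), Bk F j
noncomputable def bD : GrAlg F := ∑ j ∈ Finset.range (p-1), Bk F ((p-1)+j)
def Mi : ℕ := 2*(2*(p-1)+2*k)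
noncomputable def uD : GrAlg F := gen F (Mi p k)
noncomputable def vD : GrAlg F := gen F (Mi p k + 1)

/-- "Central-enough" elements. -/
def PcD (q : GrAlg F) : Prop :=
  Commute q (aD F p) ∧ Commute q (bD F p) ∧ Commute q (uD F p k) ∧ Commute q (vD F p k) ∧
    ∀ j, Commute q (Bk F j)

/-- "Odd-type" elements. -/
def PeD (e : GrAlg F) : Prop :=
  Commute e (aD F p) ∧ Commute e (bD F p) ∧ (∀ j, Commute e (Bk F j)) ∧
    uD F p k * e = -(e * uD F p k) ∧ vD F p k * e = -(e * vD F p k)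

variable {F p k}

lemma PcD.mul {q r : GrAlg F} (hq : PcD F p k q) (hr : PcD F p k r) : PcD F p k (q * r) :=
  ⟨hq.1.mul_left hr.1, hq.2.1.mul_left hr.2.1, hq.2.2.1.mul_left hr.2.2.1,
    hq.2.2.2.1.mul_left hr.2.2.2.1, fun j => (hq.2.2.2.2 j).mul_left (hr.2.2.2.2 j)⟩

lemma PcD.one : PcD F p k 1 :=
  ⟨Commute.one_left _, Commute.one_left _, Commute.one_left _, Commute.one_left _,
    fun _ => Commute.one_left _⟩

lemma PcD.zero : PcD F p k 0 :=
  ⟨Commute.zero_left _, Commute.zero_left _, Commute.zero_left _, Commute.zero_left _,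
    fun _ => Commute.zero_left _⟩

lemma PcD.pow {q : GrAlg F} (hq : PcD F p k q) (n : ℕ) : PcD F p k (q ^ n) :=
  ⟨hq.1.pow_left n, hq.2.1.pow_left n, hq.2.2.1.pow_left n, hq.2.2.2.1.pow_left n,
    fun j => (hq.2.2.2.2 j).pow_left n⟩

lemma PeD.neg {e : GrAlg F} (he : PeD F p k e) : PeD F p k (-e) :=
  ⟨he.1.neg_left, he.2.1.neg_left, fun j => (he.2.2.1 j).neg_left,
    by rw [mul_neg, he.2.2.2.1, neg_mul, neg_neg], by rw [mul_neg, he.2.2.2.2, neg_mul, neg_neg]⟩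

lemma PcD.smulPe {q e : GrAlg F} (hq : PcD F p k q) (he : PeD F p k e) :
    PeD F p k (q * e) := by
  refine ⟨hq.1.mul_left he.1, hq.2.1.mul_left he.2.1,
    fun j => (hq.2.2.2.2 j).mul_left (he.2.2.1 j), ?_, ?_⟩
  · linear_combination (norm := noncomm_ring) q * he.2.2.2.1 - hq.2.2.1.eq * e
  · linear_combination (norm := noncomm_ring) q * he.2.2.2.2 - hq.2.2.2.1.eq * e

lemma PeD.mulPc {e f : GrAlg F} (he : PeD F p k e) (hf : PeD F p k f) :
    PcD F p k (e * f) := by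
  refine ⟨he.1.mul_left hf.1, he.2.1.mul_left hf.2.1,
    ?_, ?_, fun j => (he.2.2.1 j).mul_left (hf.2.2.1 j)⟩
  · unfold Commute SemiconjBy
    linear_combination (norm := noncomm_ring) e * hf.2.2.2.1 - he.2.2.2.1 * f
  · unfold Commute SemiconjBy
    linear_combination (norm := noncomm_ring) e * hf.2.2.2.2 - he.2.2.2.2 * f

lemma Pc_sum_range (g : ℕ → GrAlg F) (n : ℕ) (h : ∀ j, PcD F p k (g j)) :
    PcD F p k (∑ j ∈ Finset.range n, g j) :=
  ⟨Commute.sum_left _ _ _ (fun j _ => (h j).1),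
   Commute.sum_left _ _ _ (fun j _ => (h j).2.1),
   Commute.sum_left _ _ _ (fun j _ => (h j).2.2.1),
   Commute.sum_left _ _ _ (fun j _ => (h j).2.2.2.1),
   fun i => Commute.sum_left _ _ _ (fun j _ => (h j).2.2.2.2 i)⟩

lemma Pc_Bk (j : ℕ) : PcD F p k (Bk F j) := by
  refine ⟨?_, ?_, Bk_gen_comm F j _, Bk_gen_comm F j _, fun i => Bk_comm F j i⟩
  · exact Commute.sum_right _ _ _ (fun i _ => Bk_comm F j i)
  · exact Commute.sum_right _ _ _ (fun i _ => Bk_comm F j _)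

lemma Pc_a : PcD F p k (aD F p) := Pc_sum_range _ _ (fun j => Pc_Bk j)
lemma Pc_b : PcD F p k (bD F p) := Pc_sum_range _ _ (fun j => Pc_Bk _)

lemma Pe_u : PeD F p k (uD F p k) := by
  refine ⟨?_, ?_, fun j => (Bk_gen_comm F j _).symm, ?_, ?_⟩
  · exact (Pc_a (k := k)).2.2.1.symm
  · exact (Pc_b (k := k)).2.2.1.symm
  · show gen F _ * gen F _ = -(gen F _ * gen F _); rw [gen_sq, neg_zero]
  · exact gen_anticomm F _ _

lemma Pe_v : PeD F p k (vD F p k) := by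
  refine ⟨?_, ?_, fun j => (Bk_gen_comm F j _).symm, ?_, ?_⟩
  · exact (Pc_a (k := k)).2.2.2.1.symm
  · exact (Pc_b (k := k)).2.2.2.1.symm
  · exact gen_anticomm F _ _
  · show gen F _ * gen F _ = -(gen F _ * gen F _); rw [gen_sq, neg_zero]

end Setup
section Lnb
variable {L : Type*} [LieRing L]

lemma lnb_nil (x : L) : lnb x [] = x := rfl
lemma lnb_cons_s15 (x c : L) (l : List L) : lnb x (c :: l) = lnb ⁅x, c⁆ l := rfl
lemma lnb_append (x : L) (l1 l2 : List L) : lnb x (l1 ++ l2) = lnb (lnb x l1) l2 :=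
  List.foldl_append

end Lnb

section Reps
variable {F : Type} [Field F] {p k : ℕ}

/-- the matrix `y`. -/
noncomputable def Ym (F : Type) [Field F] (p k : ℕ) : Matrix (Fin 2) (Fin 2) (GrAlg F) :=
  !![bD F p, 0; vD F p k, 0]

/-- the matrix `x`. -/
noncomputable def Xm (F : Type) [Field F] (p k : ℕ) : Matrix (Fin 2) (Fin 2) (GrAlg F) :=
  !![aD F p, uD F p k; 0, 0]

lemma repY (n : ℕ) : ∀ s e f : GrAlg F, PcD F p k s → PeD F p k e → PeD F p k f →
    ∃ s', PcD F p k s' ∧ lnb (Wm s e f) (List.replicate n (Ym F p k)) =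
      Wm s' (((-1:ℤ)^n) • (bD F p ^ n * e)) (bD F p ^ n * f) := by
  induction n with
  | zero =>
    intro s e f hs he hf
    exact ⟨s, hs, by simp [lnb_nil]⟩
  | succ n ih =>
    intro s e f hs he hf
    rw [List.replicate_succ, lnb_cons_s15]
    rw [show ⁅Wm s e f, Ym F p k⁆ = Wm (e * vD F p k) (-(bD F p * e)) (bD F p * f) from
      stepY _ _ _ _ _ hs.2.1.eq hs.2.2.2.1.eq he.2.2.2.2 hf.2.1.eq]
    obtain ⟨s', hs', heq⟩ := ih (e * vD F p k) (-(bD F p * e)) (bD F p * f)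
      (he.mulPc Pe_v) ((Pc_b.smulPe he).neg) (Pc_b.smulPe hf)
    refine ⟨s', hs', ?_⟩
    rw [heq]
    simp only [pow_succ, mul_neg, smul_neg, mul_smul, neg_smul, one_smul, neg_neg,
      ← mul_assoc]

lemma repX (n : ℕ) : ∀ s e f : GrAlg F, PcD F p k s → PeD F p k e → PeD F p k f →
    ∃ s', PcD F p k s' ∧ lnb (Wm s e f) (List.replicate n (Xm F p k)) =
      Wm s' (((-1:ℤ)^n) • (aD F p ^ n * e)) (aD F p ^ n * f) := by
  induction n with
  | zero =>
    intro s e f hs he hf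
    exact ⟨s, hs, by simp [lnb_nil]⟩
  | succ n ih =>
    intro s e f hs he hf
    rw [List.replicate_succ, lnb_cons_s15]
    rw [show ⁅Wm s e f, Xm F p k⁆ = Wm (f * uD F p k) (-(aD F p * e)) (aD F p * f) from
      stepX _ _ _ _ _ hs.1.eq hs.2.2.1.eq hf.2.2.2.1 hf.1.eq]
    obtain ⟨s', hs', heq⟩ := ih (f * uD F p k) (-(aD F p * e)) (aD F p * f)
      (hf.mulPc Pe_u) ((Pc_a.smulPe he).neg) (Pc_a.smulPe hf)
    refine ⟨s', hs', ?_⟩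
    rw [heq]
    simp only [pow_succ, mul_neg, smul_neg, mul_smul, neg_smul, one_smul, neg_neg,
      ← mul_assoc]

lemma repZ (l : List ℕ) : ∀ s e f : GrAlg F, PcD F p k s → PeD F p k e → PeD F p k f →
    ∃ s', PcD F p k s' ∧
      lnb (Wm s e f) (l.map (fun j => (!![Bk F j, 0; 0, 0] : Matrix (Fin 2) (Fin 2) (GrAlg F)))) =
      Wm s' (((-1:ℤ)^l.length) • ((l.map (Bk F)).prod * e)) ((l.map (Bk F)).prod * f) := by
  induction l with
  | nil =>
    intro s e f hs he hf
    exact ⟨s, hs, by simp [lnb_nil]⟩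
  | cons j t ih =>
    intro s e f hs he hf
    rw [List.map_cons, lnb_cons_s15]
    rw [show ⁅Wm s e f, !![Bk F j, 0; 0, 0]⁆ = Wm 0 (-(Bk F j * e)) (Bk F j * f) from
      stepZ _ _ _ _ (hs.2.2.2.2 j).eq (hf.2.2.1 j).eq]
    obtain ⟨s', hs', heq⟩ := ih 0 (-(Bk F j * e)) (Bk F j * f)
      PcD.zero (((Pc_Bk j).smulPe he).neg) ((Pc_Bk j).smulPe hf)
    refine ⟨s', hs', ?_⟩
    rw [heq]
    have hc : Commute (Bk F j) ((t.map (Bk F)).prod) := by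
      apply Commute.list_prod_right
      intro y hy
      obtain ⟨i, _, rfl⟩ := List.mem_map.mp hy
      exact Bk_comm F j i
    simp only [List.length_cons, List.map_cons, List.prod_cons, pow_succ, mul_neg,
      smul_neg, mul_smul, neg_smul, one_smul, neg_neg, ← mul_assoc, hc.eq]

end Reps
section Memberships
variable (F : Type) [Field F]

lemma gen_mem_grange (i : ℕ) :
    gen F i ∈ (LinearMap.range (ExteriorAlgebra.ι F : (ℕ →₀ F) →ₗ[F] GrAlg F)) :=
  ⟨Finsupp.single i 1, rfl⟩

lemma gen_mem_oddPart (i : ℕ) : gen F i ∈ oddPart F := by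
  have h : (LinearMap.range (ExteriorAlgebra.ι F : (ℕ →₀ F) →ₗ[F] GrAlg F)) ^ (2*0+1)
      ≤ oddPart F := le_iSup (fun n : ℕ => _ ^ (2*n+1)) 0
  apply h
  simpa using gen_mem_grange F i

lemma Bk_mem_evenPart (j : ℕ) : Bk F j ∈ evenPart F := by
  have h : (LinearMap.range (ExteriorAlgebra.ι F : (ℕ →₀ F) →ₗ[F] GrAlg F)) ^ (2*(0+1))
      ≤ evenPart F := le_iSup (fun n : ℕ => _ ^ (2*(n+1))) 0
  apply h
  have : (2*(0+1)) = 2 := by norm_num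
  rw [this, pow_two]
  exact Submodule.mul_mem_mul (gen_mem_grange F _) (gen_mem_grange F _)

lemma aD_mem_evenPart (p : ℕ) : aD F p ∈ evenPart F :=
  Submodule.sum_mem _ (fun j _ => Bk_mem_evenPart F j)

lemma bD_mem_evenPart (p : ℕ) : bD F p ∈ evenPart F :=
  Submodule.sum_mem _ (fun j _ => Bk_mem_evenPart F _)

end Memberships

section Lists

def blkL (j : ℕ) : List ℕ := [2*j, 2*j+1]

lemma mem_flatMap_blk {J : List ℕ} {m : ℕ} :
    m ∈ J.flatMap blkL ↔ ∃ j ∈ J, m = 2*j ∨ m = 2*j+1 := by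
  simp [List.mem_flatMap, blkL, eq_comm]

lemma nodup_flatMap_blk (J : List ℕ) (hJ : J.Nodup) : (J.flatMap blkL).Nodup := by
  rw [List.nodup_flatMap]
  constructor
  · intro j _
    simp only [blkL]
    refine List.nodup_cons.mpr ⟨?_, List.nodup_singleton _⟩
    simp only [List.mem_singleton]
    omega
  · refine hJ.imp ?_
    intro c d hcd
    intro m hm1 hm2
    simp only [blkL, List.mem_cons, List.mem_singleton, List.not_mem_nil, or_false] at hm1 hm2
    omega

lemma ofFn_nat_eq {α : Type*} (n : ℕ) : ∀ (g : ℕ → α),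
    List.ofFn (fun i : Fin n => g (i : ℕ)) = (List.range n).map g := by
  induction n with
  | zero => intro g; simp
  | succ n ih =>
    intro g
    rw [List.ofFn_succ, List.range_succ_eq_map, List.map_cons, List.map_map]
    congr 1
    exact ih (fun m => g (m+1))

variable (F : Type) [Field F]

lemma prodBk_eq (J : List ℕ) :
    (J.map (Bk F)).prod = ((J.flatMap blkL).map (gen F)).prod := by
  induction J with
  | nil => simp
  | cons j t ih => simp [List.flatMap_cons, Bk, blkL, mul_assoc, ih]

end Lists

section Zsmul
variable {F : Type} [Field F] {p k : ℕ}

lemma PeD.zsmul {e : GrAlg F} (he : PeD F p k e) (z : ℤ) : PeD F p k (z • e) := by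
  refine ⟨?_, ?_, fun j => ?_, ?_, ?_⟩
  · exact Commute.smul_left he.1 z
  · exact Commute.smul_left he.2.1 z
  · exact Commute.smul_left (he.2.2.1 j) z
  · rw [mul_smul_comm, he.2.2.2.1, smul_neg, smul_mul_assoc]
  · rw [mul_smul_comm, he.2.2.2.2, smul_neg, smul_mul_assoc]

lemma PcD.zsmul {q : GrAlg F} (hq : PcD F p k q) (z : ℤ) : PcD F p k (z • q) :=
  ⟨Commute.smul_left hq.1 z, Commute.smul_left hq.2.1 z, Commute.smul_left hq.2.2.1 z,
   Commute.smul_left hq.2.2.2.1 z, fun j => Commute.smul_left (hq.2.2.2.2 j) z⟩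

end Zsmul
section MainAux
variable {F : Type} [Field F] {p k : ℕ}

lemma Pc_list_prod (L : List (GrAlg F)) (h : ∀ q ∈ L, PcD F p k q) :
    PcD F p k L.prod := by
  induction L with
  | nil => simpa using PcD.one
  | cons q t ih =>
    rw [List.prod_cons]
    exact (h q (by simp)).mul (ih (fun r hr => h r (by simp [hr])))

end MainAux

set_option maxHeartbeats 1000000 in
/-- Over a field of characteristic `p > 2`, the adjoint Lie algebra
`M_{1,1}(E)` does not satisfy `[x,y^(p-1),x^(p-1),z₁,…,z_{2k},y] = 0` for any
integer `k ≥ 0`. -/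
theorem stmt15 (F : Type) [Field F] (p : ℕ) (hp : 2 < p) [CharP F p] (k : ℕ) :
    ∃ x ∈ M11carrier F (evenPart F), ∃ y ∈ M11carrier F (evenPart F),
      ∃ z : Fin (2 * k) → Matrix (Fin 2) (Fin 2) (GrAlg F),
        (∀ i, z i ∈ M11carrier F (evenPart F)) ∧
        lnb x (List.replicate (p - 1) y ++ List.replicate (p - 1) x ++
          List.ofFn z ++ [y]) ≠ 0 := by
  classical
  refine ⟨Xm F p k, ?_, Ym F p k, ?_,
    (fun i => !![Bk F (2*(p-1)+(i:ℕ)), 0; 0, 0]), ?_, ?_⟩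
  · refine ⟨?_, ?_, ?_, ?_⟩ <;> simp [Xm, M11carrier] <;>
      first
        | exact aD_mem_evenPart F p
        | exact gen_mem_oddPart F _
        | exact Submodule.zero_mem _
  · refine ⟨?_, ?_, ?_, ?_⟩ <;> simp [Ym, M11carrier] <;>
      first
        | exact bD_mem_evenPart F p
        | exact gen_mem_oddPart F _
        | exact Submodule.zero_mem _
  · intro i
    refine ⟨?_, ?_, ?_, ?_⟩ <;> simp [M11carrier] <;>
      first
        | exact Bk_mem_evenPart F _
        | exact Submodule.zero_mem _
  · -- main computation
    set lx : List ℕ := List.range (p-1) with hlx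
    set ly : List ℕ := (List.range (p-1)).map (fun j => (p-1)+j) with hly
    set lz : List ℕ := (List.range (2*k)).map (fun i => 2*(p-1)+i) with hlz
    have hzfn : List.ofFn (fun i : Fin (2*k) =>
        (!![Bk F (2*(p-1)+(i:ℕ)), 0; 0, 0] : Matrix (Fin 2) (Fin 2) (GrAlg F)))
        = lz.map (fun j => !![Bk F j, 0; 0, 0]) := by
      rw [hlz, List.map_map]
      exact ofFn_nat_eq (2*k) (fun m => !![Bk F (2*(p-1)+m), 0; 0, 0])
    -- the chain
    have hpe1 : PeD F p k (-(bD F p * uD F p k)) := (Pc_b.smulPe Pe_u).neg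
    have hpf1 : PeD F p k (-(aD F p * vD F p k)) := (Pc_a.smulPe Pe_v).neg
    have hps0 : PcD F p k (uD F p k * vD F p k) := Pe_u.mulPc Pe_v
    obtain ⟨s1, hs1, h1⟩ := repY (p := p) (k := k) (p-2) _ _ _ hps0 hpe1 hpf1
    set E1 : GrAlg F := ((-1:ℤ)^(p-2)) • (bD F p ^ (p-2) * -(bD F p * uD F p k)) with hE1
    set F1 : GrAlg F := bD F p ^ (p-2) * -(aD F p * vD F p k) with hF1
    have hpE1 : PeD F p k E1 := (((Pc_b.pow (p-2)).smulPe hpe1)).zsmul _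
    have hpF1 : PeD F p k F1 := (Pc_b.pow (p-2)).smulPe hpf1
    obtain ⟨s2, hs2, h2⟩ := repX (p := p) (k := k) (p-1) s1 E1 F1 hs1 hpE1 hpF1
    set E2 : GrAlg F := ((-1:ℤ)^(p-1)) • (aD F p ^ (p-1) * E1) with hE2
    set F2 : GrAlg F := aD F p ^ (p-1) * F1 with hF2
    have hpE2 : PeD F p k E2 := (((Pc_a.pow (p-1)).smulPe hpE1)).zsmul _
    have hpF2 : PeD F p k F2 := (Pc_a.pow (p-1)).smulPe hpF1
    obtain ⟨s3, hs3, h3⟩ := repZ (p := p) (k := k) lz s2 E2 F2 hs2 hpE2 hpF2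
    set Pz : GrAlg F := (lz.map (Bk F)).prod with hPz
    have hpPz : PcD F p k Pz := by
      apply Pc_list_prod
      intro q hq
      obtain ⟨j, _, rfl⟩ := List.mem_map.mp hq
      exact Pc_Bk j
    set E3 : GrAlg F := ((-1:ℤ)^lz.length) • (Pz * E2) with hE3
    set F3 : GrAlg F := Pz * F2 with hF3
    have hpE3 : PeD F p k E3 := ((hpPz.smulPe hpE2)).zsmul _
    have hpF3 : PeD F p k F3 := hpPz.smulPe hpF2
    have h4 : ⁅Wm s3 E3 F3, Ym F p k⁆ =
        Wm (E3 * vD F p k) (-(bD F p * E3)) (bD F p * F3) :=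
      stepY _ _ _ _ _ hs3.2.1.eq hs3.2.2.2.1.eq hpE3.2.2.2.2 hpF3.2.1.eq
    -- assemble
    have hrep : List.replicate (p-1) (Ym F p k) =
        Ym F p k :: List.replicate (p-2) (Ym F p k) := by
      rw [show p - 1 = (p-2)+1 from by omega, List.replicate_succ]
    have hassm : lnb (Xm F p k) (List.replicate (p - 1) (Ym F p k) ++
        List.replicate (p - 1) (Xm F p k) ++
        List.ofFn (fun i : Fin (2*k) =>
          (!![Bk F (2*(p-1)+(i:ℕ)), 0; 0, 0] : Matrix (Fin 2) (Fin 2) (GrAlg F))) ++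
        [Ym F p k]) = Wm (E3 * vD F p k) (-(bD F p * E3)) (bD F p * F3) := by
      rw [hzfn, hrep, lnb_append, lnb_append, lnb_append, lnb_cons_s15, lnb_cons_s15]
      rw [show ⁅Xm F p k, Ym F p k⁆ =
          Wm (uD F p k * vD F p k) (-(bD F p * uD F p k)) (-(aD F p * vD F p k)) from
        step0 _ _ _ _ (Pc_a (F := F) (p := p) (k := k)).2.1.eq Pe_v.1.eq Pe_v.2.2.2.1]
      rw [h1, h2, h3, lnb_nil, h4]
    rw [hassm]
    -- nonvanishing of the (0,0) entry
    apply Wm_ne_zero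
    clear_value E1 F1 E2 F2 E3 F3
    clear h1 h2 h3 h4 hassm
    have hlzlen : lz.length = 2*k := by simp [hlz]
    have hEv : E3 * vD F p k =
        ((-1:ℤ)^(2*k+((p-1)+((p-2)+1)))) •
          (Pz * (aD F p ^(p-1) * (bD F p ^(p-2) * (bD F p * (uD F p k * vD F p k))))) := by
      rw [hE3, hE2, hE1, hlzlen]
      simp only [smul_mul_assoc, mul_smul_comm, smul_smul, mul_neg, neg_mul, smul_neg,
        neg_neg, mul_assoc]
      rw [← neg_smul]
      congr 1
      rw [pow_add, pow_add, pow_add, pow_one]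
      ring
    have hsign : ((-1:ℤ)^(2*k+((p-1)+((p-2)+1)))) = 1 :=
      Even.neg_one_pow ⟨k+(p-1), by omega⟩
    rw [hsign, one_smul] at hEv
    have hbb : bD F p ^(p-2) * (bD F p * (uD F p k * vD F p k)) =
        bD F p ^(p-1) * (uD F p k * vD F p k) := by
      rw [← mul_assoc, ← pow_succ, show (p-2)+1 = p-1 from by omega]
    rw [hbb] at hEv
    have hA' : aD F p ^(p-1) = (p-1).factorial • ((List.range (p-1)).map (Bk F)).prod := by
      have hA := sum_pow_eq_factorial (Bk F) (Bk_comm F) (Bk_sq F) (p-1)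
      simpa [aD] using hA
    have hB' : bD F p ^(p-1) = (p-1).factorial • (ly.map (Bk F)).prod := by
      have hB := sum_pow_eq_factorial (fun j => Bk F ((p-1)+j)) (fun i j => Bk_comm F _ _)
        (fun i => Bk_sq F _) (p-1)
      rw [hly, List.map_map]
      simpa [bD, Function.comp_def] using hB
    rw [hA', hB'] at hEv
    have hEv2 : E3 * vD F p k = ((p-1).factorial * (p-1).factorial) •
        (Pz * (((List.range (p-1)).map (Bk F)).prod *
          ((ly.map (Bk F)).prod * (uD F p k * vD F p k)))) := by
      rw [hEv]
      simp only [smul_mul_assoc, mul_smul_comm, smul_smul]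
    have hbody : Pz * (((List.range (p-1)).map (Bk F)).prod *
        ((ly.map (Bk F)).prod * (uD F p k * vD F p k))) =
        (((lz ++ (lx ++ ly)).flatMap blkL ++ [Mi p k, Mi p k + 1]).map (gen F)).prod := by
      rw [List.map_append, List.prod_append, ← prodBk_eq, List.map_append, List.prod_append,
        List.map_append, List.prod_append]
      simp [uD, vD, mul_assoc, hlx, hPz]
    have hJbound : ∀ j ∈ lz ++ (lx ++ ly), j < 2*(p-1)+2*k := by
      intro j hj
      simp only [hlx, hly, hlz, List.mem_append, List.mem_map, List.mem_range] at hj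
      rcases hj with ⟨i, hi, rfl⟩ | (h | ⟨i, hi, rfl⟩) <;> omega
    have hJnodup : (lz ++ (lx ++ ly)).Nodup := by
      refine List.Nodup.append ?_ (List.Nodup.append ?_ ?_ ?_) ?_
      · exact List.Nodup.map (fun a b h => by omega) List.nodup_range
      · exact List.nodup_range
      · exact List.Nodup.map (fun a b h => by omega) List.nodup_range
      · intro m hm1 hm2
        simp only [hlx, hly, List.mem_map, List.mem_range] at hm1 hm2
        obtain ⟨i, hi, rfl⟩ := hm2
        omega
      · intro m hm1 hm2
        simp only [hlx, hly, hlz, List.mem_append, List.mem_map, List.mem_range] at hm1 hm2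
        obtain ⟨i, hi, rfl⟩ := hm1
        rcases hm2 with h | ⟨i', hi', he⟩ <;> omega
    have hnodup : ((lz ++ (lx ++ ly)).flatMap blkL ++ [Mi p k, Mi p k + 1]).Nodup := by
      refine List.Nodup.append (nodup_flatMap_blk _ hJnodup) ?_ ?_
      · refine List.nodup_cons.mpr ⟨?_, List.nodup_singleton _⟩
        simp
      · intro m hm1 hm2
        obtain ⟨j, hj, hor⟩ := mem_flatMap_blk.mp hm1
        have hb := hJbound j hj
        simp only [List.mem_cons, List.mem_singleton, List.not_mem_nil, or_false, Mi] at hm2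
        omega
    rw [hEv2, hbody, ← Nat.cast_smul_eq_nsmul F]
    apply smul_ne_zero
    · have hprime : p.Prime := by
        rcases CharP.char_is_prime_or_zero F p with h | h
        · exact h
        · omega
      rw [Ne, CharP.cast_eq_zero_iff F p]
      intro hdvd
      rcases (Nat.Prime.dvd_mul hprime).mp hdvd with h | h <;>
        exact absurd ((Nat.Prime.dvd_factorial hprime).mp h) (by omega)
    · exact prodG_ne_zero F _ hnodup
end SumPow
end
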